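/- If X > 1 is a real number that is not an integer and c > 1, then the series ∑_{m=1, m ≠ X}^∞ (log m)^n / (m^c · |log(X/m)|) converges, and for c = 1 + 1/log T it is O((log T)^{n+2}) as T → ∞. -/

import Mathlib

open Real Finset

lemma aux_summable_log2 : Summable (fun m : ℕ => 1 / ((m : ℝ) * (Real.log m) ^ 2)) := by
  rw [← summable_nat_add_iff 1]
  set F : ℕ → ℝ := fun m => 1 / (((m : ℝ) + 1) * (Real.log (m + 1)) ^ 2) with hF
  have hnonneg : ∀ m, 0 ≤ F m := by
    intro m; positivity
  have hmono : ∀ ⦃a b : ℕ⦄, 0 < a → a ≤ b → F b ≤ F a := by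
    intro a b ha hab
    apply one_div_le_one_div_of_le
    · have h2 : (2:ℝ) ≤ (a:ℝ) + 1 := by
        have : (1:ℕ) ≤ a := ha
        have h := (Nat.one_le_cast (α := ℝ)).mpr this; linarith
      have hl : (0:ℝ) < Real.log ((a:ℝ)+1) := by
        apply Real.log_pos; linarith
      positivity
    · have hab' : ((a:ℝ)+1) ≤ (b:ℝ)+1 := by have h := (Nat.cast_le (α := ℝ)).mpr hab; linarith
      have h2a : (2:ℝ) ≤ (a:ℝ) + 1 := by
        have : (1:ℕ) ≤ a := ha
        have h := (Nat.one_le_cast (α := ℝ)).mpr this; linarith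
      have hla : (0:ℝ) < Real.log ((a:ℝ)+1) := Real.log_pos (by linarith)
      have hlog : Real.log ((a:ℝ)+1) ≤ Real.log ((b:ℝ)+1) :=
        Real.log_le_log (by linarith) hab'
      have := mul_le_mul hab' (pow_le_pow_left₀ hla.le hlog 2) (by positivity) (by linarith)
      push_cast at this ⊢
      convert this using 2
  have key : Summable (fun k : ℕ => (2:ℝ) ^ k * F (2 ^ k)) := by
    rw [← summable_nat_add_iff 1]
    have hsum : Summable (fun k : ℕ => (1 / Real.log 2 ^ 2) * (1 / ((k:ℝ)+1) ^ 2)) := by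
      apply Summable.mul_left
      have := (summable_nat_add_iff (f := fun k : ℕ => 1 / (k:ℝ) ^ 2) 1).mpr
        (Real.summable_one_div_nat_pow.mpr one_lt_two)
      simpa using this
    apply Summable.of_nonneg_of_le _ _ hsum
    · intro k; positivity
    · intro k
      have h2 : (0:ℝ) < 2 ^ (k+1) := by positivity
      have hcast : ((2 ^ (k+1) : ℕ) : ℝ) = (2:ℝ) ^ (k+1) := by push_cast; ring
      have hlog2 : (0:ℝ) < Real.log 2 := Real.log_pos one_lt_two
      have hlogge : ((k:ℝ)+1) * Real.log 2 ≤ Real.log ((2:ℝ) ^ (k+1) + 1) := by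
        calc ((k:ℝ)+1) * Real.log 2 = Real.log ((2:ℝ) ^ (k+1)) := by
              rw [Real.log_pow]; push_cast; ring
          _ ≤ Real.log ((2:ℝ) ^ (k+1) + 1) := Real.log_le_log (by positivity) (by linarith)
      have hlogpos : (0:ℝ) < ((k:ℝ)+1) * Real.log 2 := by positivity
      have hdenom : (2:ℝ)^(k+1) * (((k:ℝ)+1) * Real.log 2) ^ 2 ≤
          ((2:ℝ)^(k+1) + 1) * (Real.log ((2:ℝ)^(k+1) + 1)) ^ 2 := by
        apply mul_le_mul (by linarith) (pow_le_pow_left₀ hlogpos.le hlogge 2) (by positivity) (by positivity)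
      have : (2:ℝ) ^ (k+1) * F (2 ^ (k+1)) ≤
          (2:ℝ)^(k+1) * (1 / ((2:ℝ)^(k+1) * (((k:ℝ)+1) * Real.log 2) ^ 2)) := by
        apply mul_le_mul_of_nonneg_left _ (by positivity)
        simp only [hF, hcast]
        exact one_div_le_one_div_of_le (by positivity) hdenom
      calc (2:ℝ) ^ (k+1) * F (2 ^ (k+1)) ≤ _ := this
        _ = (1 / Real.log 2 ^ 2) * (1 / ((k:ℝ)+1) ^ 2) := by
            field_simp
  have := (summable_condensed_iff_of_nonneg hnonneg hmono).mp key
  convert this using 2 with m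
  case e'_5 => simp only [hF]; push_cast; rfl
  case e'_3 => rfl

lemma aux_delta (X : ℝ) (hX : 1 < X) (hXint : ∀ m : ℤ, X ≠ (m : ℝ)) :
    ∃ δ : ℝ, 0 < δ ∧ ∀ m : ℕ+, δ ≤ |Real.log (X / m)| := by
  set M := ⌈Real.exp 1 * X⌉₊ with hM
  have hXpos : (0:ℝ) < X := by linarith
  have hexp1 : (1:ℝ) < Real.exp 1 := by
    have := Real.add_one_le_exp 1; linarith
  have hMX : Real.exp 1 * X ≤ M := Nat.le_ceil _
  have hM1 : 1 ≤ M := by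
    rw [hM, Nat.one_le_ceil_iff]; nlinarith
  have hS : (Finset.Icc 1 M).Nonempty := ⟨1, Finset.mem_Icc.mpr ⟨le_refl _, hM1⟩⟩
  set f : ℕ → ℝ := fun m => |Real.log (X / m)| with hf
  set δ₀ := (Finset.Icc 1 M).inf' hS f with hδ₀
  have hδ₀pos : 0 < δ₀ := by
    rw [hδ₀, Finset.lt_inf'_iff]
    intro m hm
    rw [Finset.mem_Icc] at hm
    have hm1 : (1:ℝ) ≤ (m:ℝ) := by exact_mod_cast hm.1
    have hXm : X / m ≠ 1 := by
      intro h
      have : X = m := by field_simp at h; linarith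
      exact hXint m (by exact_mod_cast this)
    have hpos : (0:ℝ) < X / m := by positivity
    have : Real.log (X / m) ≠ 0 := Real.log_ne_zero_of_pos_of_ne_one hpos hXm
    exact abs_pos.mpr this
  refine ⟨min δ₀ 1, lt_min hδ₀pos one_pos, fun m => ?_⟩
  by_cases hc : (m : ℕ) ≤ M
  · have hmem : (m : ℕ) ∈ Finset.Icc 1 M := Finset.mem_Icc.mpr ⟨m.one_le, hc⟩
    exact le_trans (min_le_left _ _) (Finset.inf'_le f hmem)
  · push_neg at hc
    have hmr : Real.exp 1 * X < (m:ℝ) := by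
      have : (M:ℝ) < (m:ℕ) := by exact_mod_cast hc
      linarith
    have hmpos : (0:ℝ) < (m:ℝ) := by positivity
    have hlt : X / m < Real.exp (-1) := by
      rw [div_lt_iff₀ hmpos, Real.exp_neg, inv_mul_eq_div, lt_div_iff₀ (Real.exp_pos 1)]
      nlinarith
    have hlog : Real.log (X / m) < -1 := by
      calc Real.log (X / m) < Real.log (Real.exp (-1)) :=
            Real.log_lt_log (by positivity) hlt
        _ = -1 := Real.log_exp _
    have : 1 ≤ |Real.log (X / m)| := by
      rw [abs_of_neg (by linarith)]; linarith
    exact le_trans (min_le_right _ _) this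

lemma aux_term (n : ℕ) (ε : ℝ) (hε : 0 < ε) (m : ℕ+) :
    (Real.log m) ^ n / (m:ℝ) ^ (1+ε) ≤
      (((n+2).factorial : ℝ) / ε^(n+2) + 1) *
        (if (m:ℕ) = 1 then 1 else 1 / ((m:ℝ) * (Real.log m)^2)) := by
  have hK : (0:ℝ) < ((n+2).factorial : ℝ) / ε^(n+2) := by positivity
  by_cases h1 : (m:ℕ) = 1
  · rw [if_pos h1]
    have hm : ((m:ℕ):ℝ) = 1 := by exact_mod_cast h1
    rw [hm, Real.log_one, Real.one_rpow, div_one, mul_one]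
    calc (0:ℝ)^n ≤ 1 := pow_le_one₀ le_rfl zero_le_one
      _ ≤ _ := by linarith
  · rw [if_neg h1]
    have hm2 : 2 ≤ (m:ℕ) := by
      rcases Nat.lt_or_ge (m:ℕ) 2 with h | h
      · interval_cases h' : (m:ℕ) <;> simp_all [PNat.one_le]
      · exact h
    have hmr : (2:ℝ) ≤ ((m:ℕ):ℝ) := by exact_mod_cast hm2
    have hmpos : (0:ℝ) < ((m:ℕ):ℝ) := by linarith
    set L := Real.log m with hL
    have hLpos : 0 < L := Real.log_pos (by linarith)
    have hrpow : ((m:ℕ):ℝ) ^ (1+ε) = (m:ℝ) * Real.exp (L * ε) := by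
      rw [Real.rpow_add hmpos, Real.rpow_one, Real.rpow_def_of_pos hmpos]
    have hexp : (L*ε)^(n+2) / ((n+2).factorial : ℝ) ≤ Real.exp (L * ε) :=
      Real.pow_div_factorial_le_exp _ (by positivity) (n+2)
    have hden : (0:ℝ) < (m:ℝ) * ((L*ε)^(n+2) / ((n+2).factorial : ℝ)) := by positivity
    have step1 : L ^ n / (m:ℝ) ^ (1+ε) ≤
        L ^ n / ((m:ℝ) * ((L*ε)^(n+2) / ((n+2).factorial : ℝ))) := by
      rw [hrpow]
      apply div_le_div_of_nonneg_left (by positivity) hden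
      exact mul_le_mul_of_nonneg_left hexp hmpos.le
    have key : L ^ n / ((m:ℝ) * ((L*ε)^(n+2) / ((n+2).factorial : ℝ))) =
        (((n+2).factorial : ℝ) / ε^(n+2)) * (1 / ((m:ℝ) * L^2)) := by
      rw [mul_pow, pow_add L n 2]
      have hfac : (((n+2).factorial : ℝ)) ≠ 0 := by positivity
      field_simp
    calc L ^ n / (m:ℝ) ^ (1+ε) ≤ _ := step1
      _ = (((n+2).factorial : ℝ) / ε^(n+2)) * (1 / ((m:ℝ) * L^2)) := key
      _ ≤ (((n+2).factorial : ℝ) / ε^(n+2) + 1) * (1 / ((m:ℝ) * L^2)) := by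
          apply mul_le_mul_of_nonneg_right (by linarith) (by positivity)

theorem sum_logpow_over_log_dist (X : ℝ) (hX : 1 < X) (hXint : ∀ m : ℤ, X ≠ (m : ℝ)) (n : ℕ) :
    (∀ c : ℝ, 1 < c →
        Summable fun m : ℕ+ =>
          (Real.log m) ^ n / ((m : ℝ) ^ c * |Real.log (X / m)|)) ∧
      ∃ C T₀ : ℝ, ∀ T : ℝ, T₀ ≤ T →
        (∑' m : ℕ+,
            (Real.log m) ^ n / ((m : ℝ) ^ (1 + 1 / Real.log T) * |Real.log (X / m)|)) ≤
          C * (Real.log T) ^ (n + 2) := by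
  obtain ⟨δ, hδ, hδle⟩ := aux_delta X hX hXint
  set g : ℕ+ → ℝ := fun m => if (m:ℕ) = 1 then 1 else 1 / ((m:ℝ) * (Real.log m)^2) with hg
  have hg_nonneg : ∀ m, 0 ≤ g m := by
    intro m; rw [hg]; dsimp only; split <;> positivity
  have hg_summable : Summable g := by
    have h1 : Summable (fun m : ℕ+ => 1 / ((m:ℝ) * (Real.log m)^2)) :=
      aux_summable_log2.comp_injective PNat.coe_injective
    have h2 : Summable (fun m : ℕ+ => if (m:ℕ) = 1 then (1:ℝ) else 0) := by
      apply summable_of_ne_finset_zero (s := {1})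
      intro m hm
      rw [if_neg]
      intro h
      exact hm (by simp [← PNat.coe_injective.eq_iff, h])
    apply (h1.add h2).congr
    intro m
    rw [hg]; dsimp only
    by_cases h : (m:ℕ) = 1
    · have : ((m:ℕ):ℝ) = 1 := by exact_mod_cast h
      simp [h, this]
    · simp [h]
  have hterm_nonneg : ∀ (c : ℝ) (m : ℕ+),
      0 ≤ (Real.log m) ^ n / ((m : ℝ) ^ c * |Real.log (X / m)|) := by
    intro c m
    have hln : (0:ℝ) ≤ Real.log m := Real.log_nonneg (by exact_mod_cast m.one_le)
    exact div_nonneg (pow_nonneg hln n) (by positivity)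
  have hbound : ∀ ε : ℝ, 0 < ε → ∀ m : ℕ+,
      (Real.log m) ^ n / ((m : ℝ) ^ (1+ε) * |Real.log (X / m)|) ≤
        (1/δ) * ((((n+2).factorial : ℝ) / ε^(n+2) + 1) * g m) := by
    intro ε hε m
    have hln : (0:ℝ) ≤ Real.log m := Real.log_nonneg (by exact_mod_cast m.one_le)
    have hmpos : (0:ℝ) < (m:ℝ) := by exact_mod_cast m.pos
    have hB : (0:ℝ) < (m:ℝ) ^ (1+ε) := Real.rpow_pos_of_pos hmpos _
    have step1 : (Real.log m) ^ n / ((m : ℝ) ^ (1+ε) * |Real.log (X / m)|) ≤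
        (Real.log m) ^ n / ((m : ℝ) ^ (1+ε) * δ) := by
      apply div_le_div_of_nonneg_left (pow_nonneg hln n) (by positivity)
      exact mul_le_mul_of_nonneg_left (hδle m) hB.le
    have step2 : (Real.log m) ^ n / ((m : ℝ) ^ (1+ε) * δ) =
        (1/δ) * ((Real.log m) ^ n / (m : ℝ) ^ (1+ε)) := by
      rw [one_div, ← div_div, div_eq_inv_mul]
    have step3 := aux_term n ε hε m
    calc (Real.log m) ^ n / ((m : ℝ) ^ (1+ε) * |Real.log (X / m)|) ≤ _ := step1
      _ = (1/δ) * ((Real.log m) ^ n / (m : ℝ) ^ (1+ε)) := step2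
      _ ≤ (1/δ) * ((((n+2).factorial : ℝ) / ε^(n+2) + 1) * g m) := by
          apply mul_le_mul_of_nonneg_left _ (by positivity)
          exact step3
  have hsummable : ∀ c : ℝ, 1 < c →
      Summable fun m : ℕ+ =>
        (Real.log m) ^ n / ((m : ℝ) ^ c * |Real.log (X / m)|) := by
    intro c hc
    have hc' : c = 1 + (c - 1) := by ring
    have hε : 0 < c - 1 := by linarith
    rw [hc']
    apply Summable.of_nonneg_of_le (fun m => hterm_nonneg _ m) (hbound (c-1) hε)
    apply (hg_summable.mul_left ((1/δ) * (((n+2).factorial : ℝ) / (c-1)^(n+2) + 1))).congr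
    intro m; ring
  refine ⟨hsummable, (1/δ) * ((((n+2).factorial : ℝ) + 1) * ∑' m, g m), Real.exp 1, ?_⟩
  intro T hT
  have hTpos : (0:ℝ) < T := lt_of_lt_of_le (Real.exp_pos 1) hT
  have hlogT : (1:ℝ) ≤ Real.log T := by
    rw [← Real.log_exp 1]
    exact Real.log_le_log (Real.exp_pos 1) hT
  have hlTpos : (0:ℝ) < Real.log T := by linarith
  set ε : ℝ := 1 / Real.log T with hεdef
  have hε : 0 < ε := by positivity
  have hεinv : ε ^ (n+2) = 1 / (Real.log T) ^ (n+2) := by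
    rw [hεdef, div_pow, one_pow]
  have hS0 : (0:ℝ) ≤ ∑' m, g m := tsum_nonneg hg_nonneg
  have hsum1 : Summable fun m : ℕ+ =>
      (Real.log m) ^ n / ((m : ℝ) ^ (1+ε) * |Real.log (X / m)|) :=
    hsummable (1+ε) (by linarith)
  have hsum2 : Summable fun m : ℕ+ =>
      ((1/δ) * (((n+2).factorial : ℝ) / ε^(n+2) + 1)) * g m :=
    hg_summable.mul_left _
  have h1 : (∑' m : ℕ+,
      (Real.log m) ^ n / ((m : ℝ) ^ (1+ε) * |Real.log (X / m)|)) ≤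
      ∑' m : ℕ+, ((1/δ) * (((n+2).factorial : ℝ) / ε^(n+2) + 1)) * g m := by
    apply Summable.tsum_le_tsum _ hsum1 hsum2
    intro m
    calc _ ≤ (1/δ) * ((((n+2).factorial : ℝ) / ε^(n+2) + 1) * g m) := hbound ε hε m
      _ = ((1/δ) * (((n+2).factorial : ℝ) / ε^(n+2) + 1)) * g m := by ring
  rw [tsum_mul_left] at h1
  have hKle : ((n+2).factorial : ℝ) / ε^(n+2) + 1 ≤
      (((n+2).factorial : ℝ) + 1) * (Real.log T) ^ (n+2) := by
    rw [hεinv]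
    have hpow1 : (1:ℝ) ≤ (Real.log T) ^ (n+2) := one_le_pow₀ hlogT
    have : ((n+2).factorial : ℝ) / (1 / (Real.log T) ^ (n+2)) =
        ((n+2).factorial : ℝ) * (Real.log T) ^ (n+2) := by
      field_simp
    rw [this]
    nlinarith [(Nat.cast_pos (α := ℝ)).mpr (Nat.factorial_pos (n+2))]
  calc (∑' m : ℕ+,
      (Real.log m) ^ n / ((m : ℝ) ^ (1+ε) * |Real.log (X / m)|)) ≤ _ := h1
    _ ≤ (1/δ) * ((((n+2).factorial : ℝ) + 1) * (Real.log T) ^ (n+2)) * ∑' m, g m := by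
        apply mul_le_mul_of_nonneg_right _ hS0
        exact mul_le_mul_of_nonneg_left hKle (by positivity)
    _ = (1/δ) * ((((n+2).factorial : ℝ) + 1) * ∑' m, g m) * (Real.log T) ^ (n+2) := by
        ring
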